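/- For n = 3, an arc diagram is uniquely determined by the valences of its four marked points together with the location of a break in the border: if two arc diagrams with the same clockwise order of marked points and the same valences (a at z_∞ and b, c, d at the three finite points, clockwise) both have zero arcs between the same specified adjacent pair of marked points, then the two diagrams are equal. Equivalently, the associated linear system (with unknowns the arc-multiplicities between the remaining adjacent pairs and the multiplicity of the single possible long chord) has at most one nonnegative integer solution, since its coefficient matrix has determinant 2. -/
import Mathlib


namespace CactusPaper

/-- The indexing set of the generators `s_{p,q}`, `1 ≤ p < q ≤ n`, of the cactus group. -/
abbrev GenIdx (n : ℕ) : Type := {pq : ℕ × ℕ // 1 ≤ pq.1 ∧ pq.1 < pq.2 ∧ pq.2 ≤ n}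

/-- The defining relations of the cactus group `J_n`:
`s_{p,q}² = e`;  `s_{p,q} s_{p',q'} = s_{p',q'} s_{p,q}` whenever the intervals `[p,q]` and
`[p',q']` are disjoint;  `s_{p,q} s_{p',q'} s_{p,q} = s_{p+q-q', p+q-p'}` whenever
`p ≤ p' < q' ≤ q`. -/
def cactusRels (n : ℕ) : Set (FreeGroup (GenIdx n)) :=
  {w | (∃ s : GenIdx n, w = FreeGroup.of s * FreeGroup.of s) ∨
    (∃ s t : GenIdx n, (s.1.2 < t.1.1 ∨ t.1.2 < s.1.1) ∧
      w = FreeGroup.of s * FreeGroup.of t * (FreeGroup.of s)⁻¹ * (FreeGroup.of t)⁻¹) ∨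
    (∃ s t u : GenIdx n, s.1.1 ≤ t.1.1 ∧ t.1.2 ≤ s.1.2 ∧
      u.1.1 = s.1.1 + s.1.2 - t.1.2 ∧ u.1.2 = s.1.1 + s.1.2 - t.1.1 ∧
      w = FreeGroup.of s * FreeGroup.of t * FreeGroup.of s * (FreeGroup.of u)⁻¹)}

/-- The cactus group `J_n`, presented by the generators `s_{p,q}` and the cactus relations. -/
abbrev CactusGroup (n : ℕ) : Type := PresentedGroup (cactusRels n)

/-- The generator `s_{p,q}` of the cactus group `J_n`. -/
def gen (n : ℕ) (s : GenIdx n) : CactusGroup n := PresentedGroup.of s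

/-- The generator `s_{p,q}` of `J_n`, with the constraints on `p, q` given separately. -/
def genPQ (n p q : ℕ) (h1 : 1 ≤ p) (h2 : p < q) (h3 : q ≤ n) : CactusGroup n :=
  gen n ⟨(p, q), h1, h2, h3⟩

/-- Raw data of an arc diagram on the disc with `n+1` marked boundary points:
position `0` carries `z_∞` and positions `1, …, n` carry the finite points, in clockwise
order starting from `z_∞`;  `lbl k` is the index `i` of the label `z_i` sitting at
position `k`, and `mult i j` is the number of (parallel, non-crossing) arcs joining the
marked points at positions `i` and `j`.  (An isotopy class of a system of non-crossing
arcs is faithfully recorded by these multiplicities.) -/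
structure PreDiagram (n : ℕ) where
  lbl : ℕ → ℕ
  mult : ℕ → ℕ → ℕ

/-- The valence (total number of arc ends) at position `k`. -/
def valence {n : ℕ} (D : PreDiagram n) (k : ℕ) : ℕ :=
  ∑ j ∈ Finset.range (n + 1), D.mult k j

/-- `D` is an arc diagram in `X(l 1, …, l n, linf)`: the labels of positions `1, …, n` are
a bijection of `{1, …, n}` (normalized to `0` elsewhere), the multiplicity matrix is
symmetric, loopless and supported on positions `≤ n`, the arcs are pairwise non-crossing,
the point `z_∞` has valence `linf`, and the point `z_i` has valence `l i`. -/
def IsDiagram {n : ℕ} (l : ℕ → ℕ) (linf : ℕ) (D : PreDiagram n) : Prop :=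
  Set.BijOn D.lbl (Set.Icc 1 n) (Set.Icc 1 n) ∧
  (∀ k, k ∉ Set.Icc 1 n → D.lbl k = 0) ∧
  (∀ i j, D.mult i j = D.mult j i) ∧
  (∀ i, D.mult i i = 0) ∧
  (∀ i j, n < i ∨ n < j → D.mult i j = 0) ∧
  (∀ a b c d, a < b → b < c → c < d → d ≤ n → D.mult a c = 0 ∨ D.mult b d = 0) ∧
  valence D 0 = linf ∧
  (∀ k, 1 ≤ k → k ≤ n → valence D k = l (D.lbl k))

/-- The set `X(l 1, …, l n, linf)` of arc diagrams. -/
abbrev ADiagram (n : ℕ) (l : ℕ → ℕ) (linf : ℕ) : Type :=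
  {D : PreDiagram n // IsDiagram l linf D}

/-- The involution of positions reversing the interval `[p,q]`. -/
def sigmaRev (p q k : ℕ) : ℕ := if p ≤ k ∧ k ≤ q then p + q - k else k

/-- The number of arcs at position `a` crossing the shear line of `s_{p,q}`, i.e. joining
`a` to a position outside `[p,q]`. -/
def crossDeg {n : ℕ} (D : PreDiagram n) (p q a : ℕ) : ℕ :=
  ∑ j ∈ (Finset.range (n + 1)).filter (fun j => j < p ∨ q < j), D.mult a j

/-- Cumulative count, along the shear line of `s_{p,q}`, of the crossing arcs of the *new*
(reversed) diagram emanating from positions `p, …, a` of the active region (the point at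
position `b` of the new diagram is the point at position `p+q-b` of the old one). -/
def inCum {n : ℕ} (D : PreDiagram n) (p q a : ℕ) : ℕ :=
  ∑ b ∈ Finset.Icc p a, crossDeg D p q (p + q - b)

/-- The positions outside `[p,q]` in their order along the shear line, starting from the
end of the shear line lying between positions `p-1` and `p`:
`p-1, p-2, …, 1, 0, n, n-1, …, q+1`. -/
def outRank (n p j : ℕ) : ℕ := if j < p then p - 1 - j else p + (n - j)

/-- Cumulative count, along the shear line, of the crossing arc ends outside the active
region, up to (and including) those attached at position `j`. -/
def outCum {n : ℕ} (D : PreDiagram n) (p q j : ℕ) : ℕ :=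
  ∑ j' ∈ (Finset.range (n + 1)).filter
      (fun j' => (j' < p ∨ q < j') ∧ outRank n p j' ≤ outRank n p j),
    crossDeg D p q j'

/-- The number of arcs of the new diagram joining a position `a ∈ [p,q]` to a position
`j ∉ [p,q]`: the cut arcs are reconnected matching up, in order, the crossing arc ends on
the two sides of the shear line (this being the unique non-crossing reconnection), so this
number is the overlap of the interval of shear-line indices belonging to `a` with the one
belonging to `j`. -/
def crossMult {n : ℕ} (D : PreDiagram n) (p q a j : ℕ) : ℕ :=
  min (inCum D p q a) (outCum D p q j) -
    max (inCum D p q a - crossDeg D p q (p + q - a)) (outCum D p q j - crossDeg D p q j)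

/-- The action of the generator `s_{p,q}` on arc-diagram data: the marked points at the
positions in `[p,q]` are reversed (together with their labels), the arcs inside the active
region are reflected along with them, the arcs outside are kept, and the arcs crossing the
shear line are reconnected in the unique non-crossing fashion. -/
def genAct {n : ℕ} (p q : ℕ) (D : PreDiagram n) : PreDiagram n where
  lbl := fun k => D.lbl (sigmaRev p q k)
  mult := fun i j =>
    if n < i ∨ n < j then 0
    else if (p ≤ i ∧ i ≤ q) ∧ (p ≤ j ∧ j ≤ q) then D.mult (sigmaRev p q i) (sigmaRev p q j)
    else if p ≤ i ∧ i ≤ q then crossMult D p q i j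
    else if p ≤ j ∧ j ≤ q then crossMult D p q j i
    else D.mult i j

/-- `A` is *the* action of the cactus group `J_n` on `X(l 1, …, l n, linf)`: a group
homomorphism `J_n →* Perm(X)` sending each generator `s_{p,q}` to the
reversal-and-reconnection operation `genAct p q`. -/
def IsCactusAction {n : ℕ} (l : ℕ → ℕ) (linf : ℕ)
    (A : CactusGroup n →* Equiv.Perm (ADiagram n l linf)) : Prop :=
  ∀ (s : GenIdx n) (x : ADiagram n l linf),
    ((A (gen n s)) x).1 = genAct s.1.1 s.1.2 x.1

/-- The border thickness of an arc diagram: the minimal number of arcs joining a pair of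
adjacent marked points (positions `k` and `k+1 mod (n+1)`). -/
noncomputable def borderThickness {n : ℕ} (D : PreDiagram n) : ℕ :=
  sInf {m : ℕ | ∃ k ≤ n, m = D.mult k ((k + 1) % (n + 1))}

/-- The greatest common divisor of all the arc multiplicities of the diagram. -/
def multGcd {n : ℕ} (D : PreDiagram n) : ℕ :=
  Finset.gcd (Finset.range (n + 1) ×ˢ Finset.range (n + 1)) (fun ij => D.mult ij.1 ij.2)

/-- Clockwise cyclic distance from position `k` to position `j` among the `n+1`
boundary positions. -/
def cdist (n k j : ℕ) : ℕ := (j + (n + 1) - k) % (n + 1)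

/-- The number of arc ends at `k` lying strictly clockwise of the bundle of parallel arcs
joining `k` to `j` (the arcs from `k` to clockwise-nearer targets attach to `k` on the
clockwise side). -/
def cumBefore {n : ℕ} (D : PreDiagram n) (k j : ℕ) : ℕ :=
  ∑ j' ∈ (Finset.range (n + 1)).filter (fun j' => cdist n k j' < cdist n k j), D.mult k j'

/-- Arc ends: at position `k` the `valence D k` arc ends are numbered `0, 1, …` in
clockwise order.  `ArcRel D (k, t) (j, s)` holds exactly when some arc of the diagram has
its two ends at `(k, t)` and `(j, s)`: the `r`-th parallel arc (counted from the outermost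
one) of the bundle joining `k` and `j` attaches at its two endpoints in opposite relative
orders. -/
def ArcRel {n : ℕ} (D : PreDiagram n) (e f : ℕ × ℕ) : Prop :=
  ∃ r < D.mult e.1 f.1,
    e.2 = valence D e.1 - cumBefore D e.1 f.1 - 1 - r ∧
    f.2 = valence D f.1 - cumBefore D f.1 e.1 - D.mult e.1 f.1 + r

/-- The right-hand-rule pairing: at each marked point the consecutive arc ends `2r` and
`2r + 1` (in clockwise order) are joined within one loop of the decomposition. -/
def RhrRel {n : ℕ} (D : PreDiagram n) (e f : ℕ × ℕ) : Prop :=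
  e.1 = f.1 ∧ ∃ r, e.2 = 2 * r ∧ f.2 = 2 * r + 1

/-- The arc ends of an arc diagram. -/
abbrev Endpoint {n : ℕ} (D : PreDiagram n) : Type :=
  {e : ℕ × ℕ // e.1 ≤ n ∧ e.2 < valence D e.1}

/-- The number of components of an arc diagram all of whose valences are even: the number
of closed non-overlapping loops into which the arcs decompose under the right-hand rule.
Formally, it is the number of equivalence classes of arc ends under the equivalence
relation generated by "being the two ends of one arc" (`ArcRel`) together with the
right-hand-rule pairing at each marked point (`RhrRel`). -/
noncomputable def numComponents {n : ℕ} (D : PreDiagram n) : ℕ :=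
  Nat.card (Quot (fun e f : Endpoint D => ArcRel D e.1 f.1 ∨ RhrRel D e.1 f.1))

set_option maxHeartbeats 1000000
/-- For `n = 3`, an arc diagram is uniquely determined by the valences of
its four marked points together with the location of a break in the border: if two arc
diagrams with the same clockwise order of marked points (same labeling of positions) and
the same valences both have zero arcs between the same specified adjacent pair of marked
points, then the two diagrams are equal. -/
theorem statement_6 (l : ℕ → ℕ) (linf : ℕ) (x y : PreDiagram 3)
    (hx : IsDiagram l linf x) (hy : IsDiagram l linf y) (hlbl : x.lbl = y.lbl)
    (k : ℕ) (hk : k ≤ 3)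
    (hxk : x.mult k ((k + 1) % 4) = 0) (hyk : y.mult k ((k + 1) % 4) = 0) :
    x = y := by
  obtain ⟨-, -, hxs, hxd, hxn, hxc, hx0, hxv⟩ := hx
  obtain ⟨-, -, hys, hyd, hyn, hyc, hy0, hyv⟩ := hy
  have val : ∀ (D : PreDiagram 3) (i : ℕ),
      valence D i = D.mult i 0 + D.mult i 1 + D.mult i 2 + D.mult i 3 := by
    intro D i
    simp [valence, Finset.sum_range_succ]
  have hvx1 := hxv 1 (by norm_num) (by norm_num)
  have hvx2 := hxv 2 (by norm_num) (by norm_num)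
  have hvx3 := hxv 3 (by norm_num) (by norm_num)
  have hvy1 := hyv 1 (by norm_num) (by norm_num)
  have hvy2 := hyv 2 (by norm_num) (by norm_num)
  have hvy3 := hyv 3 (by norm_num) (by norm_num)
  rw [hlbl] at hvx1 hvx2 hvx3
  have E0 : valence x 0 = valence y 0 := hx0.trans hy0.symm
  have E1 : valence x 1 = valence y 1 := hvx1.trans hvy1.symm
  have E2 : valence x 2 = valence y 2 := hvx2.trans hvy2.symm
  have E3 : valence x 3 = valence y 3 := hvx3.trans hvy3.symm
  rw [val, val] at E0 E1 E2 E3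
  have cx := hxc 0 1 2 3 (by norm_num) (by norm_num) (by norm_num) (by norm_num)
  have cy := hyc 0 1 2 3 (by norm_num) (by norm_num) (by norm_num) (by norm_num)
  have s01x := hxs 0 1; have s02x := hxs 0 2; have s03x := hxs 0 3
  have s12x := hxs 1 2; have s13x := hxs 1 3; have s23x := hxs 2 3
  have s01y := hys 0 1; have s02y := hys 0 2; have s03y := hys 0 3
  have s12y := hys 1 2; have s13y := hys 1 3; have s23y := hys 2 3
  have d0x := hxd 0; have d1x := hxd 1; have d2x := hxd 2; have d3x := hxd 3
  have d0y := hyd 0; have d1y := hyd 1; have d2y := hyd 2; have d3y := hyd 3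
  have key : x.mult 0 1 = y.mult 0 1 ∧ x.mult 0 2 = y.mult 0 2 ∧
      x.mult 0 3 = y.mult 0 3 ∧ x.mult 1 2 = y.mult 1 2 ∧
      x.mult 1 3 = y.mult 1 3 ∧ x.mult 2 3 = y.mult 2 3 := by
    interval_cases k <;> norm_num at hxk hyk <;> omega
  obtain ⟨k01, k02, k03, k12, k13, k23⟩ := key
  have hm : ∀ i j, x.mult i j = y.mult i j := by
    intro i j
    by_cases h3 : 3 < i ∨ 3 < j
    · rw [hxn i j h3, hyn i j h3]
    · push_neg at h3
      obtain ⟨hi, hj⟩ := h3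
      interval_cases i <;> interval_cases j <;> omega
  have hmm : x.mult = y.mult := funext fun i => funext fun j => hm i j
  cases x; cases y
  simp only [PreDiagram.mk.injEq]
  exact ⟨hlbl, hmm⟩

end CactusPaper
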